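/- arXiv:2509.20865 — 3 statements merged into one kernel-verified Lean document; each statement's English description precedes it below -/
import Mathlib

section
/- Let D be a full Condorcet domain on X_n with n ≥ 3 that is copious, i.e. its restriction to every triple of X_n has exactly 4 elements. Then D is a maximal Condorcet domain. -/
/-- A vote (strict linear order) on the set of alternatives `Fin n`, encoded as
the permutation sending each position (`0` = top) to the alternative placed in
that position. -/
abbrev Vote (n : ℕ) := Equiv.Perm (Fin n)

/-- `v` ranks `a` above `b`. -/
def Above {n : ℕ} (v : Vote n) (a b : Fin n) : Prop := v.symm a < v.symm b

instance {n : ℕ} (v : Vote n) (a b : Fin n) : Decidable (Above v a b) :=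
  inferInstanceAs (Decidable (v.symm a < v.symm b))

/-- The majority relation of a list of votes: `a` is ranked above `b` iff more
than half of the votes rank `a` above `b`. -/
def Maj {n : ℕ} (l : List (Vote n)) (a b : Fin n) : Prop :=
  l.length < 2 * l.countP (fun v => decide (Above v a b))

/-- A Condorcet domain: for every odd-length list of votes from `D` the
majority relation is a strict linear order on the alternatives. -/
def IsCondorcet {n : ℕ} (D : Set (Vote n)) : Prop :=
  ∀ l : List (Vote n), Odd l.length → (∀ v ∈ l, v ∈ D) →
    IsStrictTotalOrder (Fin n) (Maj l)

/-- The position (`0` = top) of `x` in the restriction of `v` to the triple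
`{a, b, c}`: the number of elements of the triple ranked above `x` by `v`. -/
def posIn {n : ℕ} (v : Vote n) (a b c x : Fin n) : ℕ :=
  (({a, b, c} : Finset (Fin n)).filter (fun y => Above v y x)).card

/-- The `i`-th smallest element of the triple `a < b < c` (`i : Fin 3`,
0-indexed). -/
def tElem {n : ℕ} (a b c : Fin n) (i : Fin 3) : Fin n :=
  if i = 0 then a else if i = 1 then b else c

/-- The vote `v` satisfies the never condition `iNj` on the triple `a < b < c`
(`i j : Fin 3`, both 0-indexed): the `i`-th smallest element of the triple is
not in the `j`-th position (from the top) of the restriction of `v` to the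
triple. -/
def VNever {n : ℕ} (v : Vote n) (a b c : Fin n) (i j : Fin 3) : Prop :=
  posIn v a b c (tElem a b c i) ≠ (j : ℕ)

/-- The domain `D` satisfies the never condition `iNj` on the triple
`a < b < c` if every vote in `D` does. -/
def DNever {n : ℕ} (D : Set (Vote n)) (a b c : Fin n) (i j : Fin 3) : Prop :=
  ∀ v ∈ D, VNever v a b c i j

/-- A pair (triple, never condition): the triple is `a < b < c` and the
condition is `iNj` (0-indexed). -/
structure NC (n : ℕ) where
  a : Fin n
  b : Fin n
  c : Fin n
  i : Fin 3
  j : Fin 3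

/-- The pair is valid: its alternatives do form a triple `a < b < c`. -/
def NC.valid {n : ℕ} (p : NC n) : Prop := p.a < p.b ∧ p.b < p.c

/-- The vote `v` satisfies the never condition of the pair `p` on its triple. -/
def NC.holdsFor {n : ℕ} (p : NC n) (v : Vote n) : Prop :=
  VNever v p.a p.b p.c p.i p.j

/-- `N(D)`: the set of all pairs (triple, never condition) satisfied by `D`. -/
def NSet {n : ℕ} (D : Set (Vote n)) : Set (NC n) :=
  {p | p.valid ∧ DNever D p.a p.b p.c p.i p.j}

/-- `D` is full: it contains every vote that satisfies, for every pair in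
`N(D)`, the corresponding never condition. -/
def IsFull {n : ℕ} (D : Set (Vote n)) : Prop :=
  ∀ v : Vote n, (∀ p ∈ NSet D, p.holdsFor v) → v ∈ D

/-- `D` is a maximal Condorcet domain: it is a Condorcet domain and no
Condorcet domain strictly contains it. -/
def IsMaximalCD {n : ℕ} (D : Set (Vote n)) : Prop :=
  IsCondorcet D ∧ ∀ D' : Set (Vote n), IsCondorcet D' → ¬ D ⊂ D'

/-- A set `S` of (triple, never condition) pairs implies the never condition
`iNj` on the triple `a < b < c`: every vote satisfying all the conditions in
`S` satisfies `iNj` on this triple. -/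
def Implies {n : ℕ} (S : Set (NC n)) (a b c : Fin n) (i j : Fin 3) : Prop :=
  ∀ v : Vote n, (∀ p ∈ S, p.holdsFor v) → VNever v a b c i j

/-- `N(D)_T`: the set of pairs in `N(D)` whose triple differs from the triple
`(a, b, c)`. -/
def NSetOff {n : ℕ} (D : Set (Vote n)) (a b c : Fin n) : Set (NC n) :=
  {p ∈ NSet D | (p.a, p.b, p.c) ≠ (a, b, c)}

/-- The action of a bijection `π` of the alternatives on a vote: `π(v)` ranks
`x` above `y` iff `v` ranks `π⁻¹ x` above `π⁻¹ y`.  In our encoding this is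
the composition `π * v`. -/
def pVote {n : ℕ} (π : Equiv.Perm (Fin n)) (v : Vote n) : Vote n := π * v

/-- `π(D) = {π(v) : v ∈ D}`. -/
def pDom {n : ℕ} (π : Equiv.Perm (Fin n)) (D : Set (Vote n)) : Set (Vote n) :=
  pVote π '' D

/-- The standard order `α = 1 2 … n` (alternative `k` in position `k`). -/
def stdOrder (n : ℕ) : Vote n := 1

/-- The restriction of a vote to the triple `a < b < c`, recorded as the
vector of positions (0 = top) of the three elements of the triple. -/
def posVec {n : ℕ} (v : Vote n) (a b c : Fin n) : Fin 3 → ℕ :=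
  fun i => posIn v a b c (tElem a b c i)


section Aux9

variable {n : ℕ}

lemma tElem_mem (a b c : Fin n) (k : Fin 3) :
    tElem a b c k ∈ ({a, b, c} : Finset (Fin n)) := by
  fin_cases k <;> simp [tElem]

lemma tElem_inj {a b c : Fin n} (hab : a < b) (hbc : b < c) :
    Function.Injective (tElem a b c) := by
  have h1 : a ≠ b := ne_of_lt hab
  have h2 : b ≠ c := ne_of_lt hbc
  have h3 : a ≠ c := ne_of_lt (hab.trans hbc)
  intro k l h
  fin_cases k <;> fin_cases l <;> simp_all [tElem]

lemma posIn_le_two (v : Vote n) (a b c x : Fin n)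
    (hx : x ∈ ({a, b, c} : Finset (Fin n))) : posIn v a b c x ≤ 2 := by
  have hsub : ({a, b, c} : Finset (Fin n)).filter (fun y => Above v y x)
      ⊆ ({a, b, c} : Finset (Fin n)).erase x := by
    intro z hz
    rw [Finset.mem_filter] at hz
    refine Finset.mem_erase.mpr ⟨?_, hz.1⟩
    rintro rfl
    exact lt_irrefl _ hz.2
  have h1 := Finset.card_le_card hsub
  rw [Finset.card_erase_of_mem hx] at h1
  have h2 : ({a, b, c} : Finset (Fin n)).card ≤ 3 := by
    have ha := Finset.card_insert_le a ({b, c} : Finset (Fin n))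
    have hb := Finset.card_insert_le b ({c} : Finset (Fin n))
    simp only [Finset.card_singleton] at *
    omega
  unfold posIn
  omega

lemma above_iff_posIn_lt (v : Vote n) (a b c x y : Fin n)
    (hx : x ∈ ({a, b, c} : Finset (Fin n))) (hy : y ∈ ({a, b, c} : Finset (Fin n)))
    (hxy : x ≠ y) :
    Above v x y ↔ posIn v a b c x < posIn v a b c y := by
  have key : ∀ x' y' : Fin n, x' ∈ ({a, b, c} : Finset (Fin n)) → Above v x' y' →
      posIn v a b c x' < posIn v a b c y' := by
    intro x' y' hx' h
    have hsub : ({a, b, c} : Finset (Fin n)).filter (fun z => Above v z x')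
        ⊆ ({a, b, c} : Finset (Fin n)).filter (fun z => Above v z y') := by
      intro z hz
      rw [Finset.mem_filter] at hz ⊢
      exact ⟨hz.1, lt_trans hz.2 h⟩
    refine Finset.card_lt_card ((Finset.ssubset_iff_of_subset hsub).mpr
      ⟨x', Finset.mem_filter.mpr ⟨hx', h⟩, ?_⟩)
    intro hmem
    rw [Finset.mem_filter] at hmem
    exact lt_irrefl _ hmem.2
  constructor
  · exact key x y hx
  · intro h
    rcases lt_trichotomy (v.symm x) (v.symm y) with h' | h' | h'
    · exact h'
    · exact absurd (v.symm.injective h') hxy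
    · have := key y x hy h'
      omega

lemma posIn_inj (v : Vote n) (a b c x y : Fin n)
    (hx : x ∈ ({a, b, c} : Finset (Fin n))) (hy : y ∈ ({a, b, c} : Finset (Fin n)))
    (h : posIn v a b c x = posIn v a b c y) : x = y := by
  by_contra hxy
  rcases lt_trichotomy (v.symm x) (v.symm y) with h' | h' | h'
  · have := (above_iff_posIn_lt v a b c x y hx hy hxy).mp h'
    omega
  · exact hxy (v.symm.injective h')
  · have := (above_iff_posIn_lt v a b c y x hy hx (Ne.symm hxy)).mp h'
    omega

/-- The pattern of a vote on a triple, as a permutation of `Fin 3`. -/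
noncomputable def patPerm {a b c : Fin n} (hab : a < b) (hbc : b < c) (v : Vote n) :
    Equiv.Perm (Fin 3) :=
  Equiv.ofBijective
    (fun k => (⟨posIn v a b c (tElem a b c k),
      lt_of_le_of_lt (posIn_le_two v a b c _ (tElem_mem a b c k)) (by norm_num)⟩ : Fin 3))
    (Finite.injective_iff_bijective.mp (by
      intro k l h
      have h' : posIn v a b c (tElem a b c k) = posIn v a b c (tElem a b c l) :=
        congrArg Fin.val h
      exact tElem_inj hab hbc
        (posIn_inj v a b c _ _ (tElem_mem a b c k) (tElem_mem a b c l) h')))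

lemma patPerm_apply {a b c : Fin n} (hab : a < b) (hbc : b < c) (v : Vote n) (k : Fin 3) :
    ((patPerm hab hbc v) k : ℕ) = posIn v a b c (tElem a b c k) := rfl

lemma avoid_card (i j : Fin 3) :
    (Finset.univ.filter (fun σ : Equiv.Perm (Fin 3) => σ i ≠ j)).card = 4 := by
  revert i j; decide

/-- The 3-cycle on `Fin 3`. -/
def rho3 : Equiv.Perm (Fin 3) where
  toFun x := x + 1
  invFun x := x - 1
  left_inv := by decide
  right_inv := by decide

end Aux9

/-- A copious full Condorcet domain (its restriction to every triple has
exactly 4 elements) is a maximal Condorcet domain. -/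
theorem stmt9 {n : ℕ} (hn : 3 ≤ n) (D : Set (Vote n)) (hCD : IsCondorcet D)
    (hfull : IsFull D)
    (hcop : ∀ a b c : Fin n, a < b → b < c →
      ((fun v => posVec v a b c) '' D).ncard = 4) :
    IsMaximalCD D := by
  refine ⟨hCD, ?_⟩
  intro D' hCD' hss
  have hsub : D ⊆ D' := hss.subset
  obtain ⟨v, hvD', hvD⟩ := Set.exists_of_ssubset hss
  have hnotall : ¬ ∀ p ∈ NSet D, p.holdsFor v := fun h => hvD (hfull v h)
  push_neg at hnotall
  obtain ⟨p, hpN, hpv⟩ := hnotall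
  obtain ⟨⟨hab, hbc⟩, hDN⟩ := hpN
  simp only [NC.holdsFor, VNever, not_not] at hpv
  set a := p.a with ha
  set b := p.b with hb
  set c := p.c with hc
  set i := p.i with hi
  set j := p.j with hj
  -- the image of the domain on this triple is the full set of patterns avoiding (i, j)
  set F : Equiv.Perm (Fin 3) → (Fin 3 → ℕ) := fun σ k => (σ k : ℕ) with hFdef
  have hFinj : Function.Injective F := by
    intro σ τ h
    exact Equiv.ext fun k => Fin.val_injective (congrFun h k)
  set s : Set (Equiv.Perm (Fin 3)) := {σ | σ i ≠ j} with hsdef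
  have hscard : s.ncard = 4 := by
    have hcoe : s = ↑(Finset.univ.filter (fun σ : Equiv.Perm (Fin 3) => σ i ≠ j)) := by
      ext σ; simp [hsdef]
    rw [hcoe, Set.ncard_coe_finset, avoid_card]
  have hI : ((fun w => posVec w a b c) '' D).ncard = 4 := hcop a b c hab hbc
  have hIsub : (fun w => posVec w a b c) '' D ⊆ F '' s := by
    rintro f ⟨w, hwD, rfl⟩
    refine ⟨patPerm hab hbc w, ?_, rfl⟩
    intro hcon
    exact hDN w hwD (congrArg Fin.val hcon)
  have himg : (F '' s).ncard = 4 := by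
    rw [Set.ncard_image_of_injective s hFinj, hscard]
  have hIeq : (fun w => posVec w a b c) '' D = F '' s :=
    Set.eq_of_subset_of_ncard_le hIsub (by rw [himg, hI]) ((Set.toFinite s).image F)
  have hkey : ∀ τ : Equiv.Perm (Fin 3), τ i ≠ j → ∃ w ∈ D, patPerm hab hbc w = τ := by
    intro τ hτ
    have hmem : F τ ∈ (fun w => posVec w a b c) '' D := by
      rw [hIeq]; exact ⟨τ, hτ, rfl⟩
    obtain ⟨w, hwD, hw⟩ := hmem
    exact ⟨w, hwD, hFinj ((show F (patPerm hab hbc w) = posVec w a b c from rfl).trans hw)⟩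
  set σ := patPerm hab hbc v with hσdef
  have hσi : σ i = j := Fin.val_injective hpv
  have hr1 : ∀ x : Fin 3, rho3 x ≠ x := by decide
  have hr2 : ∀ x : Fin 3, rho3 (rho3 x) ≠ x := by decide
  have hne1 : (rho3 * σ) i ≠ j := by
    rw [Equiv.Perm.mul_apply, hσi]; exact hr1 j
  have hne2 : (rho3 * (rho3 * σ)) i ≠ j := by
    rw [Equiv.Perm.mul_apply, Equiv.Perm.mul_apply, hσi]; exact hr2 j
  obtain ⟨w1, hw1D, hw1⟩ := hkey (rho3 * σ) hne1
  obtain ⟨w2, hw2D, hw2⟩ := hkey (rho3 * (rho3 * σ)) hne2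
  have hposv : ∀ k : Fin 3, posIn v a b c (tElem a b c k) = ((σ k : Fin 3) : ℕ) :=
    fun _ => rfl
  have hpos1 : ∀ k : Fin 3, posIn w1 a b c (tElem a b c k) = (((rho3 * σ) k : Fin 3) : ℕ) := by
    intro k; rw [← hw1]; rfl
  have hpos2 : ∀ k : Fin 3,
      posIn w2 a b c (tElem a b c k) = (((rho3 * (rho3 * σ)) k : Fin 3) : ℕ) := by
    intro k; rw [← hw2]; rfl
  have hxne : ∀ {m m' : Fin 3}, m ≠ m' →
      tElem a b c (σ.symm m) ≠ tElem a b c (σ.symm m') := by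
    intro m m' hmm h
    exact hmm (σ.symm.injective (tElem_inj hab hbc h))
  have habove : ∀ (u : Vote n) (π : Equiv.Perm (Fin 3)),
      (∀ k : Fin 3, posIn u a b c (tElem a b c k) = ((π k : Fin 3) : ℕ)) →
      ∀ m m' : Fin 3, m ≠ m' →
      ((π (σ.symm m) : Fin 3) : ℕ) < ((π (σ.symm m') : Fin 3) : ℕ) →
      Above u (tElem a b c (σ.symm m)) (tElem a b c (σ.symm m')) := by
    intro u π hpos m m' hmm hlt
    refine (above_iff_posIn_lt u a b c _ _ (tElem_mem a b c _) (tElem_mem a b c _)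
      (hxne hmm)).mpr ?_
    rw [hpos, hpos]; exact hlt
  have hSTO := hCD' [v, w1, w2] ⟨1, rfl⟩ (by
    intro u hu
    simp only [List.mem_cons, List.not_mem_nil, or_false] at hu
    rcases hu with rfl | rfl | rfl
    · exact hvD'
    · exact hsub hw1D
    · exact hsub hw2D)
  have hAv01 : Above v (tElem a b c (σ.symm 0)) (tElem a b c (σ.symm 1)) :=
    habove v σ hposv 0 1 (by decide)
      (by simp only [Equiv.apply_symm_apply]; decide)
  have hAv12 : Above v (tElem a b c (σ.symm 1)) (tElem a b c (σ.symm 2)) :=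
    habove v σ hposv 1 2 (by decide)
      (by simp only [Equiv.apply_symm_apply]; decide)
  have hA101 : Above w1 (tElem a b c (σ.symm 0)) (tElem a b c (σ.symm 1)) :=
    habove w1 (rho3 * σ) hpos1 0 1 (by decide)
      (by simp only [Equiv.Perm.mul_apply, Equiv.apply_symm_apply]; decide)
  have hA120 : Above w1 (tElem a b c (σ.symm 2)) (tElem a b c (σ.symm 0)) :=
    habove w1 (rho3 * σ) hpos1 2 0 (by decide)
      (by simp only [Equiv.Perm.mul_apply, Equiv.apply_symm_apply]; decide)
  have hA212 : Above w2 (tElem a b c (σ.symm 1)) (tElem a b c (σ.symm 2)) :=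
    habove w2 (rho3 * (rho3 * σ)) hpos2 1 2 (by decide)
      (by simp only [Equiv.Perm.mul_apply, Equiv.apply_symm_apply]; decide)
  have hA220 : Above w2 (tElem a b c (σ.symm 2)) (tElem a b c (σ.symm 0)) :=
    habove w2 (rho3 * (rho3 * σ)) hpos2 2 0 (by decide)
      (by simp only [Equiv.Perm.mul_apply, Equiv.apply_symm_apply]; decide)
  have hmaj01 : Maj [v, w1, w2] (tElem a b c (σ.symm 0)) (tElem a b c (σ.symm 1)) := by
    simp only [Maj, List.countP_cons, List.countP_nil, List.length_cons, List.length_nil,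
      decide_eq_true_eq, hAv01, hA101, if_true]
    split_ifs <;> omega
  have hmaj12 : Maj [v, w1, w2] (tElem a b c (σ.symm 1)) (tElem a b c (σ.symm 2)) := by
    simp only [Maj, List.countP_cons, List.countP_nil, List.length_cons, List.length_nil,
      decide_eq_true_eq, hAv12, hA212, if_true]
    split_ifs <;> omega
  have hmaj20 : Maj [v, w1, w2] (tElem a b c (σ.symm 2)) (tElem a b c (σ.symm 0)) := by
    simp only [Maj, List.countP_cons, List.countP_nil, List.length_cons, List.length_nil,
      decide_eq_true_eq, hA120, hA220, if_true]
    split_ifs <;> omega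
  haveI := hSTO
  have t02 : Maj [v, w1, w2] (tElem a b c (σ.symm 0)) (tElem a b c (σ.symm 2)) :=
    trans_of (Maj [v, w1, w2]) hmaj01 hmaj12
  have t00 : Maj [v, w1, w2] (tElem a b c (σ.symm 0)) (tElem a b c (σ.symm 0)) :=
    trans_of (Maj [v, w1, w2]) t02 hmaj20
  exact absurd t00 (irrefl_of (Maj [v, w1, w2]) _)
end

section
/- (Sen) A domain D on X_n with n ≥ 3 is a Condorcet domain if and only if for every triple T of X_n there exist i, j ∈ {1,2,3} such that D satisfies the never condition iNj on T. -/
namespace SenAux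
variable {n : ℕ}

lemma above_irrefl (v : Vote n) (a : Fin n) : ¬ Above v a a := lt_irrefl _

lemma above_total {v : Vote n} {a b : Fin n} (h : a ≠ b) : Above v a b ∨ Above v b a :=
  lt_or_gt_of_ne (fun he => h (v.symm.injective he))

lemma above_asymm {v : Vote n} {a b : Fin n} (h : Above v a b) : ¬ Above v b a := lt_asymm h

lemma above_of_not {v : Vote n} {a b : Fin n} (hab : a ≠ b) (h : ¬ Above v b a) :
    Above v a b := (above_total hab).resolve_right h

/-- linear order on a pair inside a vote -/
lemma countP_add_countP {l : List (Vote n)} {a b : Fin n} (h : a ≠ b) :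
    l.countP (fun v => decide (Above v a b)) + l.countP (fun v => decide (Above v b a))
      = l.length := by
  have : l.countP (fun v => decide (Above v b a))
      = l.countP (fun v => decide ¬ (decide (Above v a b) = true)) := by
    apply List.countP_congr
    intro v _
    by_cases hv : Above v a b
    · simp [hv, above_asymm hv]
    · simp [hv, above_of_not h.symm hv]
  rw [this, ← List.length_eq_countP_add_countP]

lemma maj_irrefl (l : List (Vote n)) (a : Fin n) : ¬ Maj l a a := by
  have : l.countP (fun v => decide (Above v a a)) = 0 :=
    List.countP_eq_zero.mpr (by intro v _; simp [above_irrefl])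
  simp [Maj, this]

lemma maj_total {l : List (Vote n)} (hodd : Odd l.length) {a b : Fin n} (h : a ≠ b) :
    Maj l a b ∨ Maj l b a := by
  have hc := countP_add_countP (l := l) h
  obtain ⟨m, hm⟩ := hodd
  unfold Maj
  omega

lemma exists_mem_of_maj₂ {l : List (Vote n)} {a b c : Fin n}
    (h1 : Maj l a b) (h2 : Maj l b c) : ∃ v ∈ l, Above v a b ∧ Above v b c := by
  by_contra h
  push_neg at h
  have hmono : l.countP (fun v => decide (Above v b c))
      ≤ l.countP (fun v => decide ¬ (decide (Above v a b) = true)) := by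
    apply List.countP_mono_left
    intro v hv hbc
    simp only [decide_eq_true_eq] at hbc ⊢
    exact fun hab => h v hv hab hbc
  have hlen := (List.length_eq_countP_add_countP (fun v => decide (Above v a b)) : l.length = _)
  unfold Maj at h1 h2
  omega

def Ord (v : Vote n) (p q r : Fin n) : Prop := Above v p q ∧ Above v q r

lemma posIn_eq {a b c : Fin n} (hab : a ≠ b) (hac : a ≠ c) (hbc : b ≠ c)
    (v : Vote n) (x : Fin n) :
    posIn v a b c x = (if Above v a x then 1 else 0) + (if Above v b x then 1 else 0)
      + (if Above v c x then 1 else 0) := by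
  unfold posIn
  rw [Finset.card_filter]
  rw [show ({a,b,c} : Finset (Fin n)) = insert a (insert b {c}) from rfl]
  rw [Finset.sum_insert (by simp [hab, hac]), Finset.sum_insert (by simp [hbc]),
    Finset.sum_singleton]
  ring

lemma posIn_perm {a b c x y z : Fin n}
    (h : ({a, b, c} : Finset (Fin n)) = ({x, y, z} : Finset (Fin n)))
    (v : Vote n) (w : Fin n) : posIn v a b c w = posIn v x y z w := by
  unfold posIn; rw [h]

lemma posZero {x y z : Fin n} (hxy : x ≠ y) (hxz : x ≠ z) (hyz : y ≠ z) {v : Vote n}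
    (h : posIn v x y z x = 0) : Ord v x y z ∨ Ord v x z y := by
  rw [posIn_eq hxy hxz hyz] at h
  by_cases hy : Above v y x <;> by_cases hz : Above v z x <;>
    simp [above_irrefl, hy, hz] at h
  rcases above_total hyz with h'|h'
  · exact Or.inl ⟨above_of_not hxy hy, h'⟩
  · exact Or.inr ⟨above_of_not hxz hz, h'⟩

lemma posOne {x y z : Fin n} (hxy : x ≠ y) (hxz : x ≠ z) (hyz : y ≠ z) {v : Vote n}
    (h : posIn v x y z x = 1) : Ord v y x z ∨ Ord v z x y := by
  rw [posIn_eq hxy hxz hyz] at h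
  by_cases hy : Above v y x <;> by_cases hz : Above v z x <;>
    simp [above_irrefl, hy, hz] at h
  · exact Or.inl ⟨hy, above_of_not hxz hz⟩
  · exact Or.inr ⟨hz, above_of_not hxy hy⟩

lemma posTwo {x y z : Fin n} (hxy : x ≠ y) (hxz : x ≠ z) (hyz : y ≠ z) {v : Vote n}
    (h : posIn v x y z x = 2) : Ord v y z x ∨ Ord v z y x := by
  rw [posIn_eq hxy hxz hyz] at h
  by_cases hy : Above v y x <;> by_cases hz : Above v z x <;>
    simp [above_irrefl, hy, hz] at h
  rcases above_total hyz with h'|h'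
  · exact Or.inl ⟨h', hz⟩
  · exact Or.inr ⟨h', hy⟩


lemma above_trans {v : Vote n} {a b c : Fin n} (h1 : Above v a b) (h2 : Above v b c) :
    Above v a c := lt_trans h1 h2

lemma maj_two {v1 v2 v3 : Vote n} {x y : Fin n}
    (h : (Above v1 x y ∧ Above v2 x y) ∨ (Above v1 x y ∧ Above v3 x y)
      ∨ (Above v2 x y ∧ Above v3 x y)) :
    Maj [v1, v2, v3] x y := by
  simp only [Maj, List.countP_cons, List.countP_nil, List.length_cons, List.length_nil]
  rcases h with ⟨h1, h2⟩ | ⟨h1, h2⟩ | ⟨h1, h2⟩ <;>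
    simp [h1, h2] <;> split_ifs <;> omega

lemma no_cycle {D : Set (Vote n)} (hD : IsCondorcet D) {v1 v2 v3 : Vote n} {x y z : Fin n}
    (m1 : v1 ∈ D) (m2 : v2 ∈ D) (m3 : v3 ∈ D)
    (hxy : Maj [v1, v2, v3] x y) (hyz : Maj [v1, v2, v3] y z)
    (hzx : Maj [v1, v2, v3] z x) : False := by
  have h := hD [v1, v2, v3] ⟨1, by norm_num⟩ (by
    intro v hv
    simp only [List.mem_cons, List.not_mem_nil, or_false] at hv
    rcases hv with rfl | rfl | rfl <;> assumption)
  exact absurd (h.trans _ _ _ (h.trans _ _ _ hxy hyz) hzx) (maj_irrefl _ x)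

lemma coset_cycle {D : Set (Vote n)} (hD : IsCondorcet D) {v1 v2 v3 : Vote n} {p q r : Fin n}
    (m1 : v1 ∈ D) (m2 : v2 ∈ D) (m3 : v3 ∈ D)
    (h1 : Ord v1 p q r) (h2 : Ord v2 q r p) (h3 : Ord v3 r p q) : False :=
  no_cycle hD m1 m2 m3
    (maj_two (Or.inr (Or.inl ⟨h1.1, h3.2⟩)))
    (maj_two (Or.inl ⟨h1.2, h2.1⟩))
    (maj_two (Or.inr (Or.inr ⟨h2.2, h3.1⟩)))

lemma posIn_of_ord {a b c : Fin n} (hab : a ≠ b) (hac : a ≠ c) (hbc : b ≠ c) {v : Vote n}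
    (h : Ord v a b c) :
    posIn v a b c a = 0 ∧ posIn v a b c b = 1 ∧ posIn v a b c c = 2 := by
  obtain ⟨h1, h2⟩ := h
  have h3 := above_trans h1 h2
  rw [posIn_eq hab hac hbc, posIn_eq hab hac hbc, posIn_eq hab hac hbc]
  simp [above_irrefl, h1, h2, h3, above_asymm h1, above_asymm h2, above_asymm h3]

lemma tri_perm₁ (a b c : Fin n) :
    ({a, b, c} : Finset (Fin n)) = ({b, c, a} : Finset (Fin n)) := by
  ext t; simp; tauto

lemma tri_perm₂ (a b c : Fin n) :
    ({a, b, c} : Finset (Fin n)) = ({c, a, b} : Finset (Fin n)) := by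
  ext t; simp; tauto

lemma tri_perm₃ (a b c : Fin n) :
    ({a, b, c} : Finset (Fin n)) = ({a, c, b} : Finset (Fin n)) := by
  ext t; simp; tauto

lemma tri_perm₄ (a b c : Fin n) :
    ({a, b, c} : Finset (Fin n)) = ({b, a, c} : Finset (Fin n)) := by
  ext t; simp; tauto

lemma tri_perm₅ (a b c : Fin n) :
    ({a, b, c} : Finset (Fin n)) = ({c, b, a} : Finset (Fin n)) := by
  ext t; simp; tauto

/-- In a Latin configuration on `{a,b,c}`, every cell (element, position) is realized. -/
lemma latin_violates {a b c : Fin n} (hab : a ≠ b) (hac : a ≠ c) (hbc : b ≠ c)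
    {v1 v2 v3 : Vote n} (h1 : Ord v1 a b c) (h2 : Ord v2 b c a) (h3 : Ord v3 c a b)
    {e : Fin n} (he : e = a ∨ e = b ∨ e = c) {jn : ℕ} (hj : jn < 3) :
    posIn v1 a b c e = jn ∨ posIn v2 a b c e = jn ∨ posIn v3 a b c e = jn := by
  obtain ⟨p1a, p1b, p1c⟩ := posIn_of_ord hab hac hbc h1
  obtain ⟨p2b, p2c, p2a⟩ := posIn_of_ord hbc (Ne.symm hab) (Ne.symm hac) h2
  obtain ⟨p3c, p3a, p3b⟩ := posIn_of_ord (Ne.symm hac) (Ne.symm hbc) hab h3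
  rw [← posIn_perm (tri_perm₁ a b c) v2] at p2a p2b p2c
  rw [← posIn_perm (tri_perm₂ a b c) v3] at p3a p3b p3c
  interval_cases jn <;> rcases he with rfl | rfl | rfl <;> tauto


/-- The case tree: if the domain realizes every (element, position) cell on the
triple `{x,y,z}` and contains a vote ordering the triple as `x > y > z`, then it
is not a Condorcet domain. -/
lemma tree {D : Set (Vote n)} (hC : IsCondorcet D) {x y z : Fin n}
    (hxy : x ≠ y) (hxz : x ≠ z) (hyz : y ≠ z)
    (H : ∀ e : Fin n, (e = x ∨ e = y ∨ e = z) → ∀ jn : ℕ, jn < 3 →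
      ∃ v ∈ D, posIn v x y z e = jn)
    {v1 : Vote n} (m1 : v1 ∈ D) (h1 : Ord v1 x y z) : False := by
  obtain ⟨v2, m2, hp2⟩ := H x (by tauto) 2 (by omega)
  rcases posTwo hxy hxz hyz hp2 with h2 | h2
  · -- h2 : Ord v2 y z x
    obtain ⟨v3, m3, hp3⟩ := H x (by tauto) 1 (by omega)
    rcases posOne hxy hxz hyz hp3 with h3 | h3
    · -- h3 : Ord v3 y x z
      obtain ⟨v4, m4, hp4⟩ := H z (by tauto) 0 (by omega)
      rw [posIn_perm (tri_perm₂ x y z) v4] at hp4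
      rcases posZero (Ne.symm hxz) (Ne.symm hyz) hxy hp4 with h4 | h4
      · -- h4 : Ord v4 z x y
        exact coset_cycle hC m1 m2 m4 h1 h2 h4
      · -- h4 : Ord v4 z y x
        obtain ⟨v5, m5, hp5⟩ := H y (by tauto) 2 (by omega)
        rw [posIn_perm (tri_perm₄ x y z) v5] at hp5
        rcases posTwo (Ne.symm hxy) hyz hxz hp5 with h5 | h5
        · -- h5 : Ord v5 x z y
          exact coset_cycle hC m5 m4 m3 h5 h4 h3
        · -- h5 : Ord v5 z x y
          exact coset_cycle hC m1 m2 m5 h1 h2 h5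
    · -- h3 : Ord v3 z x y
      exact coset_cycle hC m1 m2 m3 h1 h2 h3
  · -- h2 : Ord v2 z y x
    obtain ⟨v3, m3, hp3⟩ := H x (by tauto) 1 (by omega)
    rcases posOne hxy hxz hyz hp3 with h3 | h3
    · -- h3 : Ord v3 y x z
      obtain ⟨v4, m4, hp4⟩ := H y (by tauto) 2 (by omega)
      rw [posIn_perm (tri_perm₄ x y z) v4] at hp4
      rcases posTwo (Ne.symm hxy) hyz hxz hp4 with h4 | h4
      · -- h4 : Ord v4 x z y
        exact coset_cycle hC m4 m2 m3 h4 h2 h3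
      · -- h4 : Ord v4 z x y
        obtain ⟨v5, m5, hp5⟩ := H z (by tauto) 1 (by omega)
        rw [posIn_perm (tri_perm₂ x y z) v5] at hp5
        rcases posOne (Ne.symm hxz) (Ne.symm hyz) hxy hp5 with h5 | h5
        · -- h5 : Ord v5 x z y
          exact coset_cycle hC m5 m2 m3 h5 h2 h3
        · -- h5 : Ord v5 y z x
          exact coset_cycle hC m1 m5 m4 h1 h5 h4
    · -- h3 : Ord v3 z x y
      obtain ⟨v4, m4, hp4⟩ := H y (by tauto) 0 (by omega)
      rw [posIn_perm (tri_perm₄ x y z) v4] at hp4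
      rcases posZero (Ne.symm hxy) hyz hxz hp4 with h4 | h4
      · -- h4 : Ord v4 y x z
        obtain ⟨v5, m5, hp5⟩ := H z (by tauto) 1 (by omega)
        rw [posIn_perm (tri_perm₂ x y z) v5] at hp5
        rcases posOne (Ne.symm hxz) (Ne.symm hyz) hxy hp5 with h5 | h5
        · -- h5 : Ord v5 x z y
          exact coset_cycle hC m5 m2 m4 h5 h2 h4
        · -- h5 : Ord v5 y z x
          exact coset_cycle hC m1 m5 m3 h1 h5 h3
      · -- h4 : Ord v4 y z x
        exact coset_cycle hC m1 m4 m3 h1 h4 h3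


lemma inner {D : Set (Vote n)} {a b c x y z : Fin n}
    (hab : a ≠ b) (hac : a ≠ c) (hbc : b ≠ c)
    {v1 v2 v3 : Vote n} (m1 : v1 ∈ D) (m2 : v2 ∈ D) (m3 : v3 ∈ D)
    (h1 : Ord v1 a b c) (h2 : Ord v2 b c a) (h3 : Ord v3 c a b)
    (hset : ({x, y, z} : Finset (Fin n)) = ({a, b, c} : Finset (Fin n)))
    (hNxyz : ∃ i j : Fin 3, DNever D x y z i j) : False := by
  obtain ⟨i, j, hDN⟩ := hNxyz
  have hx : x = a ∨ x = b ∨ x = c := by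
    have : x ∈ ({a, b, c} : Finset (Fin n)) := by rw [← hset]; simp
    simpa using this
  have hy : y = a ∨ y = b ∨ y = c := by
    have : y ∈ ({a, b, c} : Finset (Fin n)) := by rw [← hset]; simp
    simpa using this
  have hz : z = a ∨ z = b ∨ z = c := by
    have : z ∈ ({a, b, c} : Finset (Fin n)) := by rw [← hset]; simp
    simpa using this
  have he : tElem x y z i = x ∨ tElem x y z i = y ∨ tElem x y z i = z := by
    unfold tElem
    split_ifs <;> tauto
  have he' : tElem x y z i = a ∨ tElem x y z i = b ∨ tElem x y z i = c := by
    rcases he with h | h | h <;> rw [h] <;> tauto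
  rcases latin_violates hab hac hbc h1 h2 h3 he' j.isLt with h | h | h
  · exact hDN v1 m1 ((posIn_perm hset v1 _).trans h)
  · exact hDN v2 m2 ((posIn_perm hset v2 _).trans h)
  · exact hDN v3 m3 ((posIn_perm hset v3 _).trans h)

lemma cycle_contra {D : Set (Vote n)}
    (hN : ∀ x y z : Fin n, x < y → y < z → ∃ i j : Fin 3, DNever D x y z i j)
    {a b c : Fin n} (hab : a ≠ b) (hac : a ≠ c) (hbc : b ≠ c)
    {v1 v2 v3 : Vote n} (m1 : v1 ∈ D) (m2 : v2 ∈ D) (m3 : v3 ∈ D)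
    (h1 : Ord v1 a b c) (h2 : Ord v2 b c a) (h3 : Ord v3 c a b) : False := by
  rcases lt_trichotomy a b with t1 | t1 | t1
  · rcases lt_trichotomy b c with t2 | t2 | t2
    · exact inner hab hac hbc m1 m2 m3 h1 h2 h3 rfl (hN a b c t1 t2)
    · exact hbc t2
    · rcases lt_trichotomy a c with t3 | t3 | t3
      · exact inner hab hac hbc m1 m2 m3 h1 h2 h3 (tri_perm₃ a b c).symm (hN a c b t3 t2)
      · exact hac t3
      · exact inner hab hac hbc m1 m2 m3 h1 h2 h3 (tri_perm₂ a b c).symm (hN c a b t3 t1)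
  · exact hab t1
  · rcases lt_trichotomy a c with t2 | t2 | t2
    · exact inner hab hac hbc m1 m2 m3 h1 h2 h3 (tri_perm₄ a b c).symm (hN b a c t1 t2)
    · exact hac t2
    · rcases lt_trichotomy b c with t3 | t3 | t3
      · exact inner hab hac hbc m1 m2 m3 h1 h2 h3 (tri_perm₁ a b c).symm (hN b c a t3 t2)
      · exact hbc t3
      · exact inner hab hac hbc m1 m2 m3 h1 h2 h3 (tri_perm₅ a b c).symm (hN c b a t3 t1)

end SenAux

/-- (Sen) A domain is a Condorcet domain iff every triple of alternatives
satisfies some never condition. -/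
theorem stmt11 {n : ℕ} (hn : 3 ≤ n) (D : Set (Vote n)) :
    IsCondorcet D ↔
      ∀ a b c : Fin n, a < b → b < c → ∃ i j : Fin 3, DNever D a b c i j := by
  open SenAux in
  constructor
  · intro hC
    by_contra hcon
    push_neg at hcon
    obtain ⟨a, b, c, hab, hbc, hno⟩ := hcon
    have hab' : a ≠ b := ne_of_lt hab
    have hbc' : b ≠ c := ne_of_lt hbc
    have hac' : a ≠ c := ne_of_lt (lt_trans hab hbc)
    have key : ∀ i j : Fin 3, ∃ v ∈ D, posIn v a b c (tElem a b c i) = (j : ℕ) := by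
      intro i j
      have h' := hno i j
      unfold DNever VNever at h'
      push_neg at h'
      exact h'
    have H : ∀ e : Fin n, (e = a ∨ e = b ∨ e = c) → ∀ jn : ℕ, jn < 3 →
        ∃ v ∈ D, posIn v a b c e = jn := by
      intro e he jn hj
      rcases he with rfl | rfl | rfl
      · have := key 0 ⟨jn, hj⟩; simpa [tElem] using this
      · have := key 1 ⟨jn, hj⟩; simpa [tElem] using this
      · have := key 2 ⟨jn, hj⟩; simpa [tElem] using this
    obtain ⟨v1, m1, hp1⟩ := H a (by tauto) 0 (by omega)
    rcases posZero hab' hac' hbc' hp1 with h1 | h1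
    · exact tree hC hab' hac' hbc' H m1 h1
    · have H' : ∀ e : Fin n, (e = a ∨ e = c ∨ e = b) → ∀ jn : ℕ, jn < 3 →
          ∃ v ∈ D, posIn v a c b e = jn := by
        intro e he jn hj
        obtain ⟨v, hv, hv2⟩ := H e (by tauto) jn hj
        exact ⟨v, hv, by rw [← posIn_perm (tri_perm₃ a b c) v]; exact hv2⟩
      exact tree hC hac' hab' (Ne.symm hbc') H' m1 h1
  · intro hN l hodd hlD
    refine { trichotomous := ?_, irrefl := fun a => maj_irrefl l a, trans := ?_ }
    · intro p q
      by_cases h : p = q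
      · exact fun _ _ => h
      · rcases maj_total hodd h with h' | h'
        · exact fun h1 _ => absurd h' h1
        · exact fun _ h2 => absurd h' h2
    · intro p q r hpq hqr
      by_contra hpr
      have hpq' : p ≠ q := by rintro rfl; exact maj_irrefl l p hpq
      have hqr' : q ≠ r := by rintro rfl; exact maj_irrefl l q hqr
      have hpr' : p ≠ r := by
        rintro rfl
        obtain ⟨v, _, ha1, ha2⟩ := exists_mem_of_maj₂ hpq hqr
        exact above_asymm ha1 ha2
      have hrp : Maj l r p := (maj_total hodd hpr').resolve_left hpr
      obtain ⟨v1, hv1, o1a, o1b⟩ := exists_mem_of_maj₂ hpq hqr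
      obtain ⟨v2, hv2, o2a, o2b⟩ := exists_mem_of_maj₂ hqr hrp
      obtain ⟨v3, hv3, o3a, o3b⟩ := exists_mem_of_maj₂ hrp hpq
      exact cycle_contra hN hpq' hpr' hqr' (hlD v1 hv1) (hlD v2 hv2) (hlD v3 hv3)
        ⟨o1a, o1b⟩ ⟨o2a, o2b⟩ ⟨o3a, o3b⟩
end

section
/- (Black) For every n ≥ 1, the set of all single-peaked linear orders on X_n with respect to the natural axis 1 < 2 < … < n is a Condorcet domain of cardinality 2^{n-1}. -/
/-- `v` is single-peaked with respect to the natural axis `1 < 2 < … < n`: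
letting `p` be the top-ranked alternative of `v`, alternatives below `p` on
the axis are ranked in increasing order and alternatives above `p` are ranked
in decreasing order. -/
def SinglePeaked {n : ℕ} (v : Vote n) : Prop :=
  ∃ p : Fin n, (∀ x : Fin n, x ≠ p → Above v p x) ∧
    (∀ a b : Fin n, a < b → b ≤ p → Above v b a) ∧
    (∀ a b : Fin n, p ≤ a → a < b → Above v a b)

/-! ### Auxiliary machinery -/

section Aux

lemma above_iff_not {n : ℕ} (v : Vote n) {a b : Fin n} (h : a ≠ b) :
    Above v a b ↔ ¬ Above v b a := by
  have hne : v.symm a ≠ v.symm b := fun e => h (v.symm.injective e)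
  unfold Above
  constructor
  · exact fun h1 h2 => absurd (h1.trans h2) (lt_irrefl _)
  · exact fun h2 => (not_lt.mp h2).lt_of_ne hne

lemma above_trans {n : ℕ} (v : Vote n) {a b c : Fin n} :
    Above v a b → Above v b c → Above v a c := fun h1 h2 => h1.trans h2

lemma above_irrefl {n : ℕ} (v : Vote n) (a : Fin n) : ¬ Above v a a :=
  lt_irrefl _

lemma countP_above_add {n : ℕ} (l : List (Vote n)) {a b : Fin n} (h : a ≠ b) :
    l.countP (fun v => decide (Above v a b)) + l.countP (fun v => decide (Above v b a))
      = l.length := by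
  induction l with
  | nil => simp
  | cons v l ih =>
    simp only [List.countP_cons, List.length_cons]
    by_cases hv : Above v a b
    · have hv' : ¬ Above v b a := (above_iff_not v h).mp hv
      simp [hv, hv']; omega
    · have hv' : Above v b a := by
        have := (above_iff_not v h.symm)
        exact this.mpr hv
      simp [hv, hv']; omega

/-- Pointwise single-peaked implication 1: for `a < b < c`, above a b → above a c. -/
lemma sp_imp1 {n : ℕ} {v : Vote n} (hv : SinglePeaked v) {a b c : Fin n}
    (hab : a < b) (hbc : b < c) : Above v a b → Above v a c := by
  obtain ⟨p, _, hp2, hp3⟩ := hv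
  intro h
  rcases le_total b p with hbp | hpb
  · exact absurd h (fun h' => absurd (h'.trans (hp2 a b hab hbp)) (lt_irrefl _))
  · exact h.trans (hp3 b c hpb hbc)

/-- Pointwise single-peaked implication 2: for `a < b < c`, above c b → above c a. -/
lemma sp_imp2 {n : ℕ} {v : Vote n} (hv : SinglePeaked v) {a b c : Fin n}
    (hab : a < b) (hbc : b < c) : Above v c b → Above v c a := by
  obtain ⟨p, _, hp2, hp3⟩ := hv
  intro h
  rcases le_total b p with hbp | hpb
  · exact h.trans (hp2 a b hab hbp)
  · exact absurd h (fun h' => absurd (h'.trans (hp3 b c hpb hbc)) (lt_irrefl _))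

/-! ### The interval construction -/

def loF (g : ℕ → Bool) (t : ℕ) : ℕ := ((Finset.range t).filter (fun s => g s = true)).card

def valF (n : ℕ) (g : ℕ → Bool) (t : ℕ) : ℕ :=
  if g t = true then loF g t else n - 1 - (t - loF g t)

lemma loF_le (g : ℕ → Bool) (t : ℕ) : loF g t ≤ t := by
  simpa [loF] using (Finset.card_filter_le (Finset.range t) (fun s => g s = true))

lemma loF_succ (g : ℕ → Bool) (t : ℕ) :
    loF g (t + 1) = loF g t + (if g t = true then 1 else 0) := by
  unfold loF
  rw [Finset.range_add_one, Finset.filter_insert]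
  split
  · rw [Finset.card_insert_of_notMem (by simp)]
  · simp

lemma loF_mono (g : ℕ → Bool) {s t : ℕ} (h : s ≤ t) : loF g s ≤ loF g t :=
  Finset.card_le_card (Finset.filter_subset_filter _ (Finset.range_subset_range.mpr h))

lemma loF_le_add (g : ℕ → Bool) {s t : ℕ} (h : s ≤ t) : loF g t ≤ loF g s + (t - s) := by
  obtain ⟨k, rfl⟩ := Nat.le.dest h
  clear h
  induction k with
  | zero => simp
  | succ k ih =>
    have h1 := loF_succ g (s + k)
    have h2 : s + (k + 1) = (s + k) + 1 := by omega
    rw [h2]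
    split at h1 <;> omega

lemma valF_bounds (n : ℕ) (g : ℕ → Bool) {t : ℕ} (ht : t ≤ n - 1) :
    loF g t ≤ valF n g t ∧ valF n g t ≤ n - 1 - (t - loF g t) := by
  have h1 := loF_le g t
  unfold valF
  split <;> omega

lemma hiF_anti (n : ℕ) (g : ℕ → Bool) {s t : ℕ} (h : s ≤ t) :
    n - 1 - (t - loF g t) ≤ n - 1 - (s - loF g s) := by
  have h1 := loF_le_add g h
  have h2 := loF_le g s
  omega

lemma valF_lt_of (n : ℕ) (g : ℕ → Bool) {s t : ℕ} (hst : s < t) (ht : t ≤ n - 1)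
    (hs : g s = true) : valF n g s < valF n g t := by
  have h2 := loF_succ g s
  have h3 := loF_mono g (show s + 1 ≤ t from hst)
  have h4 := (valF_bounds n g ht).1
  have h5 : valF n g s = loF g s := by simp [valF, hs]
  rw [hs] at h2
  simp at h2
  omega

lemma valF_gt_of (n : ℕ) (g : ℕ → Bool) {s t : ℕ} (hst : s < t) (ht : t ≤ n - 1)
    (hs : g s = false) : valF n g t < valF n g s := by
  have h1 := loF_le g s
  have h2 := loF_succ g s
  have h3 := loF_le_add g (show s + 1 ≤ t from hst)
  have h4 := loF_le g t
  have h5 := (valF_bounds n g ht).2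
  have h6 : valF n g s = n - 1 - (s - loF g s) := by simp [valF, hs]
  rw [hs] at h2
  simp at h2
  omega

lemma valF_inj (n : ℕ) (g : ℕ → Bool) {s t : ℕ} (hs : s ≤ n - 1) (ht : t ≤ n - 1)
    (h : valF n g s = valF n g t) : s = t := by
  rcases Nat.lt_trichotomy s t with h' | h' | h'
  · cases hgs : g s
    · exact absurd h (by have := valF_gt_of n g h' ht hgs; omega)
    · exact absurd h (by have := valF_lt_of n g h' ht hgs; omega)
  · exact h'
  · cases hgt : g t
    · exact absurd h (by have := valF_gt_of n g h' hs hgt; omega)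
    · exact absurd h (by have := valF_lt_of n g h' hs hgt; omega)

/-! ### The encoding map `Emap` -/

def gext (n : ℕ) (f : Fin (n - 1) → Bool) : ℕ → Bool :=
  fun t => if h : t < n - 1 then f ⟨t, h⟩ else false

def EFun {n : ℕ} (f : Fin (n - 1) → Bool) : Fin n → Fin n := fun i =>
  ⟨valF n (gext n f) (n - 1 - (i : ℕ)), by
    have hi := i.isLt
    have ht : n - 1 - (i : ℕ) ≤ n - 1 := by omega
    have := (valF_bounds n (gext n f) ht).2
    omega⟩

lemma EFun_inj {n : ℕ} (f : Fin (n - 1) → Bool) : Function.Injective (EFun f) := by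
  intro i j h
  have hi := i.isLt
  have hj := j.isLt
  have h' : valF n (gext n f) (n - 1 - (i : ℕ)) = valF n (gext n f) (n - 1 - (j : ℕ)) :=
    congrArg Fin.val h
  have := valF_inj n (gext n f) (show n - 1 - (i:ℕ) ≤ n - 1 by omega)
    (show n - 1 - (j:ℕ) ≤ n - 1 by omega) h'
  exact Fin.ext (by omega)

noncomputable def Emap {n : ℕ} (f : Fin (n - 1) → Bool) : Vote n :=
  Equiv.ofBijective (EFun f) (Finite.injective_iff_bijective.mp (EFun_inj f))

lemma Emap_apply_val {n : ℕ} (f : Fin (n - 1) → Bool) (i : Fin n) :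
    ((Emap f i : Fin n) : ℕ) = valF n (gext n f) (n - 1 - (i : ℕ)) := rfl

lemma sp_Emap {n : ℕ} (hn : 1 ≤ n) (f : Fin (n - 1) → Bool) : SinglePeaked (Emap f) := by
  set g := gext n f with hgdef
  set v := Emap f with hvdef
  have hxval : ∀ x : Fin n, (x : ℕ) = valF n g (n - 1 - (v.symm x : ℕ)) := by
    intro x
    conv_lhs => rw [← v.apply_symm_apply x]
    exact Emap_apply_val f (v.symm x)
  have hvb : ∀ x : Fin n, (v.symm x : ℕ) ≤ n - 1 := fun x => by
    have := (v.symm x).isLt; omega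
  have hp0 : (v ⟨0, hn⟩ : ℕ) = valF n g (n - 1) := by
    have := Emap_apply_val f ⟨0, hn⟩
    simpa using this
  refine ⟨v ⟨0, hn⟩, ?_, ?_, ?_⟩
  · intro x hx
    show v.symm (v ⟨0, hn⟩) < v.symm x
    rw [Equiv.symm_apply_apply]
    have hne : v.symm x ≠ ⟨0, hn⟩ := by
      intro e
      exact hx (by rw [← v.apply_symm_apply x, e])
    have : (v.symm x : ℕ) ≠ 0 := fun e => hne (Fin.ext e)
    rw [Fin.lt_def]
    simpa using Nat.pos_of_ne_zero this
  · intro a b hab hbp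
    show v.symm b < v.symm a
    have ha := hxval a
    have hb := hxval b
    set i := (v.symm a : ℕ) with hi
    set j := (v.symm b : ℕ) with hj
    have hib : i ≤ n - 1 := hvb a
    have hjb : j ≤ n - 1 := hvb b
    set s := n - 1 - i with hs
    set t := n - 1 - j with htd
    have hab' : valF n g s < valF n g t := by
      rw [Fin.lt_def, ha, hb] at hab; exact hab
    have hbp' : valF n g t ≤ valF n g (n - 1) := by
      rw [Fin.le_def, hb, hp0] at hbp; exact hbp
    have hst : s < t := by
      rcases Nat.lt_trichotomy s t with h' | h' | h'
      · exact h'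
      · rw [h'] at hab'; omega
      · exfalso
        cases hgt : g t with
        | true => have := valF_lt_of n g h' (show s ≤ n - 1 by omega) hgt; omega
        | false =>
          have h1 : valF n g t = n - 1 - (t - loF g t) := by simp [valF, hgt]
          have h2 := (valF_bounds n g (le_refl (n - 1))).2
          have h3 := hiF_anti n g (show t ≤ n - 1 by omega)
          have heq : valF n g t = valF n g (n - 1) := by omega
          have := valF_inj n g (show t ≤ n - 1 by omega) (le_refl _) heq
          omega
    rw [Fin.lt_def]
    omega
  · intro a b hpa hab
    show v.symm a < v.symm b
    have ha := hxval a
    have hb := hxval b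
    set i := (v.symm a : ℕ) with hi
    set j := (v.symm b : ℕ) with hj
    have hib : i ≤ n - 1 := hvb a
    have hjb : j ≤ n - 1 := hvb b
    set s := n - 1 - i with hs
    set t := n - 1 - j with htd
    have hab' : valF n g s < valF n g t := by
      rw [Fin.lt_def, ha, hb] at hab; exact hab
    have hpa' : valF n g (n - 1) ≤ valF n g s := by
      rw [Fin.le_def, ha, hp0] at hpa; exact hpa
    have hst : t < s := by
      rcases Nat.lt_trichotomy t s with h' | h' | h'
      · exact h'
      · rw [h'] at hab'; omega
      · exfalso
        cases hgs : g s with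
        | true =>
          have h1 : valF n g s = loF g s := by simp [valF, hgs]
          have h2 := loF_mono g (show s ≤ n - 1 by omega)
          have h3 := (valF_bounds n g (le_refl (n - 1))).1
          have heq : valF n g s = valF n g (n - 1) := by omega
          have := valF_inj n g (show s ≤ n - 1 by omega) (le_refl _) heq
          omega
        | false => have := valF_gt_of n g h' (show t ≤ n - 1 by omega) hgs; omega
    rw [Fin.lt_def]
    omega

lemma Emap_inj {n : ℕ} (hn : 1 ≤ n) : Function.Injective (Emap (n := n)) := by
  have hval : ∀ (f : Fin (n - 1) → Bool) (s : ℕ), s ≤ n - 1 →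
      valF n (gext n f) s = ((Emap f ⟨n - 1 - s, by omega⟩ : Fin n) : ℕ) := by
    intro f s hs
    rw [Emap_apply_val]
    congr 1
    show s = n - 1 - (n - 1 - s)
    omega
  have hrec : ∀ (f : Fin (n - 1) → Bool) (t : Fin (n - 1)),
      f t = decide (valF n (gext n f) (t : ℕ) < valF n (gext n f) (n - 1)) := by
    intro f t
    have htn : (t : ℕ) < n - 1 := t.isLt
    have hgt : gext n f (t : ℕ) = f t := by simp [gext, htn]
    cases hft : f t with
    | true =>
      have hg : gext n f (t : ℕ) = true := by rw [hgt, hft]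
      have h1 : valF n (gext n f) (t : ℕ) = loF (gext n f) (t : ℕ) := by simp [valF, hg]
      have h2 := loF_succ (gext n f) (t : ℕ)
      rw [hg] at h2; simp at h2
      have h3 := loF_mono (gext n f) (show (t : ℕ) + 1 ≤ n - 1 from htn)
      have h4 := (valF_bounds n (gext n f) (le_refl (n - 1))).1
      have hlt : valF n (gext n f) (t : ℕ) < valF n (gext n f) (n - 1) := by omega
      exact (decide_eq_true hlt).symm
    | false =>
      have hg : gext n f (t : ℕ) = false := by rw [hgt, hft]
      have h1 : valF n (gext n f) (t : ℕ) = n - 1 - ((t : ℕ) - loF (gext n f) (t : ℕ)) := by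
        simp [valF, hg]
      have h2 := hiF_anti n (gext n f) (show (t : ℕ) ≤ n - 1 by omega)
      have h3 := (valF_bounds n (gext n f) (le_refl (n - 1))).2
      have hge : ¬ (valF n (gext n f) (t : ℕ) < valF n (gext n f) (n - 1)) := by omega
      exact (decide_eq_false hge).symm
  intro f f' h
  funext t
  have e1 : valF n (gext n f) (t : ℕ) = valF n (gext n f') (t : ℕ) := by
    rw [hval f t (by have := t.isLt; omega), hval f' t (by have := t.isLt; omega), h]
  have e2 : valF n (gext n f) (n - 1) = valF n (gext n f') (n - 1) := by
    rw [hval f (n - 1) (le_refl _), hval f' (n - 1) (le_refl _), h]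
  rw [hrec f t, hrec f' t, e1, e2]

end Aux
section Aux2

def wfun {n : ℕ} (hn : 1 ≤ n) (v : Vote n) (t : ℕ) : Fin n := v ⟨n - 1 - t, by omega⟩

lemma wfun_symm_val {n : ℕ} (hn : 1 ≤ n) (v : Vote n) (t : ℕ) :
    ((v.symm (wfun hn v t)) : ℕ) = n - 1 - t := by
  simp [wfun]

lemma wfun_eq_of_symm {n : ℕ} (hn : 1 ≤ n) (v : Vote n) (x : Fin n) :
    wfun hn v (n - 1 - (v.symm x : ℕ)) = x := by
  have hb : (v.symm x : ℕ) ≤ n - 1 := by have := (v.symm x).isLt; omega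
  have h2 : (⟨n - 1 - (n - 1 - (v.symm x : ℕ)), by omega⟩ : Fin n) = v.symm x :=
    Fin.ext (by simp; omega)
  show v ⟨n - 1 - (n - 1 - (v.symm x : ℕ)), by omega⟩ = x
  rw [h2, Equiv.apply_symm_apply]

lemma wfun_inj {n : ℕ} (hn : 1 ≤ n) (v : Vote n) {s t : ℕ} (hs : s ≤ n - 1)
    (ht : t ≤ n - 1) (h : wfun hn v s = wfun hn v t) : s = t := by
  have h1 := wfun_symm_val hn v s
  have h2 := wfun_symm_val hn v t
  rw [h] at h1
  omega

lemma wfun_surj {n : ℕ} (hn : 1 ≤ n) (v : Vote n) {t : ℕ} (yF : Fin n)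
    (h : n - 1 - t < (v.symm yF : ℕ)) :
    ∃ s, s < t ∧ wfun hn v s = yF := by
  have hb : (v.symm yF : ℕ) ≤ n - 1 := by have := (v.symm yF).isLt; omega
  exact ⟨n - 1 - (v.symm yF : ℕ), by omega, wfun_eq_of_symm hn v yF⟩

def gsp {n : ℕ} (hn : 1 ≤ n) (v : Vote n) (p : Fin n) : ℕ → Bool :=
  fun t => if h : t < n - 1 then decide (wfun hn v t < p) else false

lemma gsp_true_iff {n : ℕ} (hn : 1 ≤ n) (v : Vote n) (p : Fin n) {t : ℕ}
    (ht : t < n - 1) : gsp hn v p t = true ↔ wfun hn v t < p := by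
  unfold gsp
  rw [dif_pos ht]
  exact decide_eq_true_iff

lemma gsp_top {n : ℕ} (hn : 1 ≤ n) (v : Vote n) (p : Fin n) :
    gsp hn v p (n - 1) = false := by
  unfold gsp
  rw [dif_neg (lt_irrefl _)]

lemma gext_eq_gsp {n : ℕ} (hn : 1 ≤ n) (v : Vote n) (p : Fin n) :
    gext n (fun t : Fin (n - 1) => decide (wfun hn v (t : ℕ) < p)) = gsp hn v p := by
  funext t
  unfold gext gsp
  split <;> rfl

lemma sp_mem_range {n : ℕ} (hn : 1 ≤ n) (v : Vote n) (hv : SinglePeaked v) :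
    ∃ f : Fin (n - 1) → Bool, Emap f = v := by
  obtain ⟨p, hp1, hp2, hp3⟩ := hv
  have hp0 : v.symm p = ⟨0, hn⟩ := by
    by_contra h
    have hne : v ⟨0, hn⟩ ≠ p := by
      intro e
      exact h (by rw [← e, Equiv.symm_apply_apply])
    have h2 : v.symm p < v.symm (v ⟨0, hn⟩) := hp1 _ hne
    rw [Equiv.symm_apply_apply] at h2
    exact absurd h2 (by simp [Fin.lt_def])
  have hp0' : v ⟨0, hn⟩ = p := by rw [← hp0, Equiv.apply_symm_apply]
  have hwtop : wfun hn v (n - 1) = p := by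
    show v ⟨n - 1 - (n - 1), by omega⟩ = p
    rw [show (⟨n - 1 - (n - 1), by omega⟩ : Fin n) = (⟨0, hn⟩ : Fin n) from
      Fin.ext (by simp)]
    exact hp0'
  have hwp : ∀ s : ℕ, s < n - 1 → wfun hn v s ≠ p := by
    intro s hs e
    have := wfun_inj hn v (show s ≤ n - 1 by omega) (le_refl (n - 1)) (e.trans hwtop.symm)
    omega
  -- main claim: the alternative at position n-1-t is valF of the canonical g
  have main : ∀ t : ℕ, t ≤ n - 1 → ((wfun hn v t : Fin n) : ℕ) = valF n (gsp hn v p) t := by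
    intro t ht
    rcases lt_trichotomy (wfun hn v t) p with hlt | heq | hgt
    · -- left of the peak
      have htn : t < n - 1 := by
        by_contra h
        have ht' : t = n - 1 := by omega
        rw [ht', hwtop] at hlt
        exact absurd hlt (lt_irrefl _)
      have hgt' : gsp hn v p t = true := (gsp_true_iff hn v p htn).mpr hlt
      have hcard : loF (gsp hn v p) t = ((wfun hn v t : Fin n) : ℕ) := by
        unfold loF
        have hbij : ((Finset.range t).filter (fun s => gsp hn v p s = true)).card
            = (Finset.range ((wfun hn v t : Fin n) : ℕ)).card := by
          refine Finset.card_bij (fun s _ => ((wfun hn v s : Fin n) : ℕ)) ?_ ?_ ?_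
          · intro s hs
            simp only [Finset.mem_filter, Finset.mem_range] at hs ⊢
            obtain ⟨hst, hgs⟩ := hs
            have hsn : s < n - 1 := by omega
            have hws : wfun hn v s < p := (gsp_true_iff hn v p hsn).mp hgs
            have hne : wfun hn v s ≠ wfun hn v t := by
              intro e
              have := wfun_inj hn v (show s ≤ n - 1 by omega) ht e
              omega
            have hlt2 : wfun hn v s < wfun hn v t := by
              rcases lt_trichotomy (wfun hn v s) (wfun hn v t) with h | h | h
              · exact h
              · exact absurd h hne
              · exfalso
                have habove := hp2 (wfun hn v t) (wfun hn v s) h (le_of_lt hws)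
                have h1 : (v.symm (wfun hn v s) : ℕ) < (v.symm (wfun hn v t) : ℕ) := habove
                rw [wfun_symm_val hn v s, wfun_symm_val hn v t] at h1
                omega
            exact hlt2
          · intro s1 hs1 s2 hs2 h
            simp only [Finset.mem_filter, Finset.mem_range] at hs1 hs2
            exact wfun_inj hn v (by omega) (by omega) (Fin.ext h)
          · intro y hy
            simp only [Finset.mem_range] at hy
            have hyn : y < n := by have := (wfun hn v t).isLt; omega
            have hyw : (⟨y, hyn⟩ : Fin n) < wfun hn v t := by
              simp only [Fin.lt_def]; exact hy
            have hyp : (⟨y, hyn⟩ : Fin n) < p := hyw.trans hlt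
            have habove := hp2 ⟨y, hyn⟩ (wfun hn v t) hyw (le_of_lt hlt)
            have h1 : (v.symm (wfun hn v t) : ℕ) < (v.symm (⟨y, hyn⟩ : Fin n) : ℕ) := habove
            rw [wfun_symm_val hn v t] at h1
            obtain ⟨s, hst, hws⟩ := wfun_surj hn v ⟨y, hyn⟩ h1
            refine ⟨s, ?_, ?_⟩
            · simp only [Finset.mem_filter, Finset.mem_range]
              refine ⟨hst, ?_⟩
              rw [gsp_true_iff hn v p (by omega), hws]
              exact hyp
            · show ((wfun hn v s : Fin n) : ℕ) = y
              rw [hws]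
        rw [hbij, Finset.card_range]
      simp [valF, hgt', hcard]
    · -- the peak itself: t = n - 1
      have ht' : t = n - 1 := by
        by_contra h
        exact hwp t (by omega) heq
      have hcard : loF (gsp hn v p) t = (p : ℕ) := by
        unfold loF
        have hbij : ((Finset.range t).filter (fun s => gsp hn v p s = true)).card
            = (Finset.range (p : ℕ)).card := by
          refine Finset.card_bij (fun s _ => ((wfun hn v s : Fin n) : ℕ)) ?_ ?_ ?_
          · intro s hs
            simp only [Finset.mem_filter, Finset.mem_range] at hs ⊢
            obtain ⟨hst, hgs⟩ := hs
            have hsn : s < n - 1 := by omega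
            exact (gsp_true_iff hn v p hsn).mp hgs
          · intro s1 hs1 s2 hs2 h
            simp only [Finset.mem_filter, Finset.mem_range] at hs1 hs2
            exact wfun_inj hn v (by omega) (by omega) (Fin.ext h)
          · intro y hy
            simp only [Finset.mem_range] at hy
            have hyn : y < n := by have := p.isLt; omega
            have hyp : (⟨y, hyn⟩ : Fin n) < p := by
              simp only [Fin.lt_def]; exact hy
            have habove := hp1 ⟨y, hyn⟩ (ne_of_lt hyp)
            have h1 : (v.symm p : ℕ) < (v.symm (⟨y, hyn⟩ : Fin n) : ℕ) := habove
            rw [hp0] at h1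
            simp only [Fin.val_mk] at h1
            have h1' : n - 1 - t < (v.symm (⟨y, hyn⟩ : Fin n) : ℕ) := by omega
            obtain ⟨s, hst, hws⟩ := wfun_surj hn v ⟨y, hyn⟩ h1'
            refine ⟨s, ?_, ?_⟩
            · simp only [Finset.mem_filter, Finset.mem_range]
              refine ⟨hst, ?_⟩
              rw [gsp_true_iff hn v p (by omega), hws]
              exact hyp
            · show ((wfun hn v s : Fin n) : ℕ) = y
              rw [hws]
        rw [hbij, Finset.card_range]
      have hgf : gsp hn v p t = false := by rw [ht']; exact gsp_top hn v p
      have hple : (p : ℕ) ≤ n - 1 := by have := p.isLt; omega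
      have hval : valF n (gsp hn v p) t = n - 1 - (t - loF (gsp hn v p) t) := by
        simp [valF, hgf]
      have hwtp : ((wfun hn v t : Fin n) : ℕ) = (p : ℕ) := congrArg Fin.val heq
      rw [hval, hcard, hwtp]
      omega
    · -- right of the peak
      have htn : t < n - 1 := by
        by_contra h
        have ht' : t = n - 1 := by omega
        rw [ht', hwtop] at hgt
        exact absurd hgt (lt_irrefl _)
      have hgf : gsp hn v p t = false := by
        cases hb : gsp hn v p t with
        | false => rfl
        | true =>
          exfalso
          have := (gsp_true_iff hn v p htn).mp hb
          exact absurd (this.trans hgt) (lt_irrefl _)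
      have hsplit : loF (gsp hn v p) t
          + ((Finset.range t).filter (fun s => ¬ (gsp hn v p s = true))).card = t := by
        have := Finset.card_filter_add_card_filter_not
          (s := Finset.range t) (p := fun s => gsp hn v p s = true)
        simpa [loF] using this
      have hcard : ((Finset.range t).filter (fun s => ¬ (gsp hn v p s = true))).card
          = n - 1 - ((wfun hn v t : Fin n) : ℕ) := by
        have hbij : ((Finset.range t).filter (fun s => ¬ (gsp hn v p s = true))).card
            = (Finset.Ico (((wfun hn v t : Fin n) : ℕ) + 1) n).card := by
          refine Finset.card_bij (fun s _ => ((wfun hn v s : Fin n) : ℕ)) ?_ ?_ ?_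
          · intro s hs
            simp only [Finset.mem_filter, Finset.mem_range] at hs
            obtain ⟨hst, hgs⟩ := hs
            have hsn : s < n - 1 := by omega
            have hws : ¬ (wfun hn v s < p) := fun hh => hgs ((gsp_true_iff hn v p hsn).mpr hh)
            have hwsp : p < wfun hn v s := by
              rcases lt_trichotomy (wfun hn v s) p with h | h | h
              · exact absurd h hws
              · exact absurd h (hwp s hsn)
              · exact h
            have hne : wfun hn v s ≠ wfun hn v t := by
              intro e
              have := wfun_inj hn v (show s ≤ n - 1 by omega) ht e
              omega
            have hlt2 : wfun hn v t < wfun hn v s := by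
              rcases lt_trichotomy (wfun hn v s) (wfun hn v t) with h | h | h
              · exfalso
                have habove := hp3 (wfun hn v s) (wfun hn v t) (le_of_lt hwsp) h
                have h1 : (v.symm (wfun hn v s) : ℕ) < (v.symm (wfun hn v t) : ℕ) := habove
                rw [wfun_symm_val hn v s, wfun_symm_val hn v t] at h1
                omega
              · exact absurd h hne
              · exact h
            have h1 : ((wfun hn v t : Fin n) : ℕ) < ((wfun hn v s : Fin n) : ℕ) := hlt2
            have h2 := (wfun hn v s).isLt
            simp only [Finset.mem_Ico]
            omega
          · intro s1 hs1 s2 hs2 h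
            simp only [Finset.mem_filter, Finset.mem_range] at hs1 hs2
            exact wfun_inj hn v (by omega) (by omega) (Fin.ext h)
          · intro y hy
            simp only [Finset.mem_Ico] at hy
            have hyn : y < n := hy.2
            have hyw : wfun hn v t < (⟨y, hyn⟩ : Fin n) := by
              simp only [Fin.lt_def]
              omega
            have hyp : p < (⟨y, hyn⟩ : Fin n) := hgt.trans hyw
            have habove := hp3 (wfun hn v t) ⟨y, hyn⟩ (le_of_lt hgt) hyw
            have h1 : (v.symm (wfun hn v t) : ℕ) < (v.symm (⟨y, hyn⟩ : Fin n) : ℕ) := habove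
            rw [wfun_symm_val hn v t] at h1
            obtain ⟨s, hst, hws⟩ := wfun_surj hn v ⟨y, hyn⟩ h1
            refine ⟨s, ?_, ?_⟩
            · simp only [Finset.mem_filter, Finset.mem_range]
              refine ⟨hst, ?_⟩
              intro hcontra
              have := (gsp_true_iff hn v p (by omega)).mp hcontra
              rw [hws] at this
              exact absurd (hyp.trans this) (lt_irrefl _)
            · show ((wfun hn v s : Fin n) : ℕ) = y
              rw [hws]
        rw [hbij, Nat.card_Ico]
        have := (wfun hn v t).isLt
        omega
      have hval : valF n (gsp hn v p) t = n - 1 - (t - loF (gsp hn v p) t) := by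
        simp [valF, hgf]
      have hwle := (wfun hn v t).isLt
      have hloF := loF_le (gsp hn v p) t
      rw [hval]
      omega
  -- conclude
  refine ⟨fun t : Fin (n - 1) => decide (wfun hn v (t : ℕ) < p), ?_⟩
  apply Equiv.ext
  intro i
  have hi := i.isLt
  apply Fin.ext
  rw [Emap_apply_val, gext_eq_gsp hn v p]
  have h1 := main (n - 1 - (i : ℕ)) (by omega)
  rw [← h1]
  show ((v ⟨n - 1 - (n - 1 - (i : ℕ)), by omega⟩ : Fin n) : ℕ) = ((v i : Fin n) : ℕ)
  congr 2
  exact Fin.ext (by simp; omega)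

end Aux2
/-- (Black) The set of all single-peaked linear orders with respect to the
natural axis is a Condorcet domain of cardinality `2 ^ (n - 1)`. -/
theorem stmt14 {n : ℕ} (hn : 1 ≤ n) :
    IsCondorcet {v : Vote n | SinglePeaked v} ∧
      {v : Vote n | SinglePeaked v}.ncard = 2 ^ (n - 1) := by
  constructor
  · -- Condorcet
    intro l hodd hmem
    have hsp : ∀ v ∈ l, SinglePeaked v := hmem
    obtain ⟨k, hk⟩ := hodd
    have hsum : ∀ a b : Fin n, a ≠ b →
        l.countP (fun v => decide (Above v a b)) +
          l.countP (fun v => decide (Above v b a)) = l.length :=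
      fun a b h => countP_above_add l h
    have hirr : ∀ a : Fin n, ¬ Maj l a a := by
      intro a h
      unfold Maj at h
      have hz : l.countP (fun v => decide (Above v a a)) = 0 := by
        rw [List.countP_eq_zero]
        intro v hv
        simp [above_irrefl]
      omega
    have hasym : ∀ a b : Fin n, Maj l a b → ¬ Maj l b a := by
      intro a b h1 h2
      by_cases hab : a = b
      · subst hab; exact hirr a h1
      · have := hsum a b hab; unfold Maj at h1 h2; omega
    have htot : ∀ a b : Fin n, a ≠ b → Maj l a b ∨ Maj l b a := by
      intro a b hab
      have := hsum a b hab
      unfold Maj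
      omega
    have hmono : ∀ a b a' b' : Fin n,
        (∀ v : Vote n, SinglePeaked v → Above v a b → Above v a' b') →
        Maj l a b → Maj l a' b' := by
      intro a b a' b' himp h
      unfold Maj at *
      have := List.countP_mono_left (l := l)
        (p := fun v => decide (Above v a b)) (q := fun v => decide (Above v a' b'))
        (by
          intro v hv hd
          simp only [decide_eq_true_eq] at *
          exact himp v (hsp v hv) hd)
      omega
    have key1 : ∀ a b c : Fin n, a < b → b < c → Maj l a b → ¬ Maj l c a := by
      intro a b c hab hbc h
      have hm : Maj l a c := hmono a b a c (fun v hv => sp_imp1 hv hab hbc) h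
      exact fun h' => hasym a c hm h'
    have key2 : ∀ a b c : Fin n, a < b → b < c → Maj l c b → ¬ Maj l a c := by
      intro a b c hab hbc h
      have hm : Maj l c a := hmono c b c a (fun v hv => sp_imp2 hv hab hbc) h
      exact fun h' => hasym c a hm h'
    have nocycle : ∀ x y z : Fin n, Maj l x y → Maj l y z → Maj l z x → False := by
      intro x y z m1 m2 m3
      rcases lt_trichotomy x y with hxy | rfl | hxy
      · rcases lt_trichotomy y z with hyz | rfl | hyz
        · exact key1 x y z hxy hyz m1 m3
        · exact hirr y m2
        · rcases lt_trichotomy x z with hxz | rfl | hxz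
          · exact key2 x z y hxz hyz m2 m1
          · exact hirr x m3
          · exact key1 z x y hxz hxy m3 m2
      · exact hirr x m1
      · rcases lt_trichotomy y z with hyz | rfl | hyz
        · rcases lt_trichotomy x z with hxz | rfl | hxz
          · exact key2 y x z hxy hxz m3 m2
          · exact hirr x m3
          · exact key1 y z x hyz hxz m2 m1
        · exact hirr y m2
        · exact key2 z y x hyz hxy m1 m3
    have i1 : IsIrrefl (Fin n) (Maj l) := ⟨hirr⟩
    have i2 : IsTrans (Fin n) (Maj l) := ⟨by
      intro a b c h1 h2
      by_cases hac : a = c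
      · subst hac; exact absurd h2 (hasym a b h1)
      · rcases htot a c hac with h | h
        · exact h
        · exact (nocycle a b c h1 h2 h).elim⟩
    have i3 : IsTrichotomous (Fin n) (Maj l) := ⟨by
      intro a b hn1 hn2
      by_cases hab : a = b
      · exact hab
      · rcases htot a b hab with h | h
        · exact absurd h hn1
        · exact absurd h hn2⟩
    haveI := i1
    haveI := i2
    haveI := i3
    haveI : IsStrictOrder (Fin n) (Maj l) := ⟨⟩
    exact ⟨⟩
  · -- cardinality
    have hset : {v : Vote n | SinglePeaked v} = Set.range (Emap (n := n)) := by
      ext v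
      constructor
      · intro hv
        obtain ⟨f, hf⟩ := sp_mem_range hn v hv
        exact ⟨f, hf⟩
      · rintro ⟨f, rfl⟩
        exact sp_Emap hn f
    rw [hset, ← Set.image_univ, Set.ncard_image_of_injective _ (Emap_inj hn),
      Set.ncard_univ, Nat.card_eq_fintype_card]
    simp
end
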